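/- Let A = {1, a, b} be a 2-integral probability group with three distinct elements such that a⁻¹ = b. Then s(a) = s(b) = 1 and p(a·a=b) = p(b·b=a) = p(a·b=1) = p(b·a=1) = 1, while p(a·a=1) = p(a·a=a) = p(b·b=1) = p(b·b=b) = p(a·b=a) = p(a·b=b) = 0. In other words, A is the probability group A(ℂℤ₃) associated to the cyclic group of order 3. -/
import Mathlib


/-- A probability group (Harrison): a set `A` with a distinguished element `one`,
an inverse map `inv`, and a probability map `p` satisfying axioms (1)-(6). -/
structure ProbabilityGroup (A : Type*) where
  /-- the probability map: `p a b c` is `p(a·b = c)` -/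
  p : A → A → A → ℝ
  /-- the unit element -/
  one : A
  /-- the inverse map -/
  inv : A → A
  p_nonneg : ∀ a b c, 0 ≤ p a b c
  finite_support : ∀ a b, {c | p a b c ≠ 0}.Finite
  sum_eq_one : ∀ a b, ∑ᶠ c, p a b c = 1
  assoc : ∀ a b c d, ∑ᶠ x, p a b x * p x c d = ∑ᶠ y, p a y d * p b c y
  one_mul : ∀ a, p one a a = 1
  mul_one : ∀ a, p a one a = 1
  inv_pos : ∀ a, 0 < p a (inv a) one
  inv_unique : ∀ a b, 0 < p a b one → b = inv a
  p_inv : ∀ a b c, p a b c = p (inv b) (inv a) (inv c)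
  inv_symm : ∀ a, p a (inv a) one = p (inv a) a one

/-- The size `s(a) = 1 / p(a·a⁻¹ = 1)` of an element of a probability group. -/
noncomputable def ProbabilityGroup.s {A : Type*} (P : ProbabilityGroup A) (a : A) : ℝ :=
  1 / P.p a (P.inv a) P.one

/-- A probability group is 2-integral if each `s(a)^(1/2)` is a positive integer and
`p(a·b=c) s(a)^(1/2) s(b)^(1/2) / s(c)^(1/2)` is always a non-negative integer. -/
def ProbabilityGroup.TwoIntegral {A : Type*} (P : ProbabilityGroup A) : Prop :=
  (∀ a, ∃ n : ℕ, 0 < n ∧ Real.sqrt (P.s a) = n) ∧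
  (∀ a b c, ∃ n : ℕ,
    P.p a b c * Real.sqrt (P.s a) * Real.sqrt (P.s b) / Real.sqrt (P.s c) = n)

/-- The probability-map data of `A(ℂℤ₃)` on `{1, a, b}` with `a⁻¹ = b`. -/
def ProbabilityGroup.Z3spec {A : Type*} (P : ProbabilityGroup A) (a b : A) : Prop :=
  P.s a = 1 ∧ P.s b = 1 ∧
  P.p a a b = 1 ∧ P.p b b a = 1 ∧ P.p a b P.one = 1 ∧ P.p b a P.one = 1 ∧
  P.p a a P.one = 0 ∧ P.p a a a = 0 ∧ P.p b b P.one = 0 ∧ P.p b b b = 0 ∧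
  P.p a b a = 0 ∧ P.p a b b = 0

/-- A 2-integral probability group `{1, a, b}` with `a⁻¹ = b` is the probability group
`A(ℂℤ₃)` associated to the cyclic group of order 3. -/
theorem twoIntegral_card_three_invPair {A : Type*} (P : ProbabilityGroup A) (a b : A)
    (ha : a ≠ P.one) (hb : b ≠ P.one) (hab : a ≠ b)
    (henum : ∀ x : A, x = P.one ∨ x = a ∨ x = b)
    (hiab : P.inv a = b)
    (h2 : P.TwoIntegral) :
    P.Z3spec a b := by

  classical
  obtain ⟨h2a, h2b⟩ := h2
  have sum3 : ∀ f : A → ℝ, ∑ᶠ c, f c = f P.one + f a + f b := by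
    intro f
    have hsub : Function.support f ⊆ (({P.one, a, b} : Finset A) : Set A) := by
      intro x _
      simp only [Finset.coe_insert, Finset.coe_singleton, Set.mem_insert_iff,
        Set.mem_singleton_iff]
      exact henum x
    rw [finsum_eq_finset_sum_of_support_subset f hsub]
    have h1 : P.one ∉ ({a, b} : Finset A) := by
      simp only [Finset.mem_insert, Finset.mem_singleton]
      push_neg
      exact ⟨Ne.symm ha, Ne.symm hb⟩
    have h2' : a ∉ ({b} : Finset A) := by simpa using hab
    rw [Finset.sum_insert h1, Finset.sum_insert h2', Finset.sum_singleton]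
    ring
  have psum : ∀ x y : A, P.p x y P.one + P.p x y a + P.p x y b = 1 := by
    intro x y
    have h := P.sum_eq_one x y
    rwa [sum3] at h
  have key : ∀ (f : A → ℝ), (∀ c, 0 ≤ f c) → (∑ᶠ c, f c = 1) →
      ∀ x y : A, f x = 1 → y ≠ x → f y = 0 := by
    intro f hnn hs x y hfx hxy
    rw [sum3] at hs
    rcases henum x with hx | hx | hx <;> rcases henum y with hy | hy | hy <;>
      rw [hx] at hfx <;> rw [hy] <;>
      first
        | exact absurd (hy.trans hx.symm) hxy
        | linarith [hnn P.one, hnn a, hnn b]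
  have pone : ∀ x y : A, y ≠ x → P.p P.one x y = 0 := fun x y hxy =>
    key (P.p P.one x) (P.p_nonneg P.one x) (P.sum_eq_one P.one x) x y (P.one_mul x) hxy
  have pone' : ∀ x y : A, y ≠ x → P.p x P.one y = 0 := fun x y hxy =>
    key (P.p x P.one) (P.p_nonneg x P.one) (P.sum_eq_one x P.one) x y (P.mul_one x) hxy
  have hpos : 0 < P.p a b P.one := by
    have h := P.inv_pos a
    rwa [hiab] at h
  have hsymm : P.p a b P.one = P.p b a P.one := by
    have h := P.inv_symm a
    rwa [hiab] at h
  have hinvb : P.inv b = a := (P.inv_unique b a (hsymm ▸ hpos)).symm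
  have hsa_def : P.s a = 1 / P.p a b P.one := by
    unfold ProbabilityGroup.s
    rw [hiab]
  have hsb_eq : P.s b = P.s a := by
    unfold ProbabilityGroup.s
    rw [hinvb, hiab, hsymm]
  have hsa_pos : 0 < P.s a := by
    rw [hsa_def]
    exact one_div_pos.mpr hpos
  obtain ⟨n, hnpos, hsa⟩ := h2a a
  have hnR : (0:ℝ) < n := by exact_mod_cast hnpos
  have hsa_val : P.s a = (n:ℝ)^2 := by
    have h := Real.sq_sqrt hsa_pos.le
    rw [hsa] at h
    linarith
  have hpab1 : P.p a b P.one = 1 / (n:ℝ)^2 := by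
    have h := hsa_def
    rw [hsa_val] at h
    rw [eq_div_iff (by positivity : ((n:ℝ)^2) ≠ 0)]
    field_simp at h
    linarith
  have hsbsqrt : Real.sqrt (P.s b) = n := by rw [hsb_eq, hsa]
  obtain ⟨k, hk⟩ := h2b a b a
  obtain ⟨m, hm⟩ := h2b a b b
  rw [hsa, hsbsqrt, mul_div_assoc, div_self (ne_of_gt hnR), mul_one] at hk
  rw [hsa, hsbsqrt, mul_div_assoc, div_self (ne_of_gt hnR), mul_one] at hm
  have hsum_ab := psum a b
  have e1 : P.p a b P.one * (n:ℝ)^2 = 1 := by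
    rw [hpab1]
    field_simp
  have hnatR : (n:ℝ) * n = 1 + ((k:ℝ) + m) * n := by
    linear_combination (-(n:ℝ)^2) * hsum_ab + e1 + (n:ℝ) * hk + (n:ℝ) * hm
  have hnat : n * n = 1 + (k + m) * n := by exact_mod_cast hnatR
  have hn1 : n = 1 := by
    have hd : n ∣ (k+m)*n + 1 := by
      rw [add_comm, ← hnat]
      exact dvd_mul_left n n
    exact Nat.dvd_one.mp ((Nat.dvd_add_right (dvd_mul_left n (k+m))).mp hd)
  rw [hn1] at hnat
  have hk0 : k = 0 := by omega
  have hm0 : m = 0 := by omega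
  rw [hn1, hk0] at hk
  rw [hn1, hm0] at hm
  have hpaba : P.p a b a = 0 := by simpa using hk
  have hpabb : P.p a b b = 0 := by simpa using hm
  have hsa1 : P.s a = 1 := by rw [hsa_val, hn1]; norm_num
  have hsb1 : P.s b = 1 := by rw [hsb_eq, hsa1]
  have hpab1' : P.p a b P.one = 1 := by rw [hpab1, hn1]; norm_num
  have hpba1 : P.p b a P.one = 1 := hsymm ▸ hpab1'
  have hpaa1 : P.p a a P.one = 0 := by
    by_contra h
    have hpos' : 0 < P.p a a P.one := lt_of_le_of_ne (P.p_nonneg a a P.one) (Ne.symm h)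
    have h' := P.inv_unique a a hpos'
    rw [hiab] at h'
    exact hab h'
  have hpbb1 : P.p b b P.one = 0 := by
    by_contra h
    have hpos' : 0 < P.p b b P.one := lt_of_le_of_ne (P.p_nonneg b b P.one) (Ne.symm h)
    have h' := P.inv_unique b b hpos'
    rw [hinvb] at h'
    exact hab h'.symm
  have hassoc := P.assoc a a b P.one
  have L : ∑ᶠ x, P.p a a x * P.p x b P.one =
      P.p a a P.one * P.p P.one b P.one + P.p a a a * P.p a b P.one +
        P.p a a b * P.p b b P.one := sum3 _
  have R : ∑ᶠ y, P.p a y P.one * P.p a b y =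
      P.p a P.one P.one * P.p a b P.one + P.p a a P.one * P.p a b a +
        P.p a b P.one * P.p a b b := sum3 _
  rw [L, R, hpaa1, hpab1', hpaba, hpabb, hpbb1, pone b P.one (Ne.symm hb),
    pone' a P.one (Ne.symm ha)] at hassoc
  have hpaaa : P.p a a a = 0 := by linarith
  have hpaab : P.p a a b = 1 := by
    have h := psum a a
    rw [hpaa1, hpaaa] at h
    linarith
  have hpbbb : P.p b b b = 0 := by
    have h := P.p_inv b b b
    rw [hinvb] at h
    rw [h]
    exact hpaaa
  have hpbba : P.p b b a = 1 := by
    have h := psum b b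
    rw [hpbb1, hpbbb] at h
    linarith
  exact ⟨hsa1, hsb1, hpaab, hpbba, hpab1', hpba1, hpaa1, hpaaa, hpbb1, hpbbb, hpaba, hpabb⟩
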